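/- Let k be an infinite field and l a finite field extension of k. Then for f ∈ l((t))^*, one has Nm_{l/k}((f,g)_t) = 1 for all g ∈ l((t))^* if and only if v(f) = 0 and Nm_{l/k}(f(0)) = 1. In other words, the kernel of the pairing l((t))^* × l((t))^* → k^*, (f,g) ↦ Nm_{l/k}((f,g)_t), is the kernel of the composite map l[[t]]^* → l^* → k^*, where the first map sends a unit power series to its constant term and the second map is the norm Nm_{l/k}. -/

import Mathlib

section Aux

variable {l : Type*} [Field l]

lemma lc_eq (x : LaurentSeries l) (hx : x ≠ 0) : x.leadingCoeff = x.coeff x.order := by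
  exact HahnSeries.leadingCoeff_eq

lemma pow_coeff_zero (f : LaurentSeries l) (hf : f ≠ 0) (h0 : f.order = 0) (n : ℕ) :
    (f ^ n).order = 0 ∧ (f ^ n).coeff 0 = (f.coeff 0) ^ n := by
  induction n with
  | zero => simp [HahnSeries.order_one]
  | succ n ih =>
    have hfn : f ^ n ≠ 0 := pow_ne_zero _ hf
    have hord : (f ^ (n+1)).order = 0 := by
      rw [pow_succ, HahnSeries.order_mul hfn hf, ih.1, h0, add_zero]
    refine ⟨hord, ?_⟩
    have := HahnSeries.coeff_mul_order_add_order (f ^ n) f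
    rw [lc_eq _ hfn, lc_eq _ hf, ih.1, h0, add_zero] at this
    rw [pow_succ, this, ih.2, pow_succ]

lemma inv_coeff_zero (f : LaurentSeries l) (hf : f ≠ 0) (h0 : f.order = 0) :
    f⁻¹ ≠ 0 ∧ f⁻¹.order = 0 ∧ f⁻¹.coeff 0 = (f.coeff 0)⁻¹ := by
  have hinv : f⁻¹ ≠ 0 := inv_ne_zero hf
  have hmul : f * f⁻¹ = 1 := mul_inv_cancel₀ hf
  have hord : f⁻¹.order = 0 := by
    have := HahnSeries.order_mul hf hinv
    rw [hmul, HahnSeries.order_one, h0, zero_add] at this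
    exact this.symm
  refine ⟨hinv, hord, ?_⟩
  have := HahnSeries.coeff_mul_order_add_order f f⁻¹
  rw [lc_eq _ hf, lc_eq _ hinv, h0, hord, add_zero, hmul] at this
  have h1 : (1 : LaurentSeries l).coeff 0 = 1 := by simp
  rw [h1] at this
  exact eq_inv_of_mul_eq_one_left (by rw [mul_comm]; exact this.symm)

lemma zpow_coeff_zero (f : LaurentSeries l) (hf : f ≠ 0) (h0 : f.order = 0) (m : ℤ) :
    (f ^ m).order = 0 ∧ (f ^ m).coeff 0 = (f.coeff 0) ^ m := by
  obtain ⟨n, rfl | rfl⟩ := m.eq_nat_or_neg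
  · rw [zpow_natCast, zpow_natCast]; exact pow_coeff_zero f hf h0 n
  · rw [zpow_neg, zpow_natCast, zpow_neg, zpow_natCast]
    obtain ⟨h1, h2⟩ := pow_coeff_zero f hf h0 n
    have := inv_coeff_zero (f ^ n) (pow_ne_zero _ hf) h1
    exact ⟨this.2.1, by rw [this.2.2, h2]⟩

/-- The norm as a monoid-with-zero hom. -/
noncomputable def normMWZ (k l : Type*) [Field k] [Field l] [Algebra k l]
    [FiniteDimensional k l] : l →*₀ k :=
  { Algebra.norm k with map_zero' := Algebra.norm_zero }

lemma normMWZ_apply {k : Type*} [Field k] [Algebra k l] [FiniteDimensional k l] (x : l) :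
    normMWZ k l x = Algebra.norm k x := rfl

lemma infinite_field_zpow_eq_one {k : Type*} [Field k] [Infinite k] {m : ℤ}
    (h : ∀ x : k, x ≠ 0 → x ^ m = 1) : m = 0 := by
  by_contra hm
  set n := m.natAbs with hn
  have hnpos : 0 < n := Int.natAbs_pos.mpr hm
  have hroot : ∀ x : k, x ≠ 0 → x ^ n = 1 := by
    intro x hx
    rcases Int.natAbs_eq m with he | he
    · rw [← zpow_natCast, ← he]; exact h x hx
    · have : x ^ m = (x ^ n)⁻¹ := by rw [he, zpow_neg, zpow_natCast]
      have := (h x hx).symm.trans this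
      exact (inv_eq_one.mp this.symm)
  have hp : (Polynomial.X ^ n - Polynomial.C 1 : Polynomial k) ≠ 0 :=
    (Polynomial.monic_X_pow_sub_C (1 : k) hnpos.ne').ne_zero
  have hfin : {x : k | (Polynomial.X ^ n - Polynomial.C 1 : Polynomial k).IsRoot x}.Finite :=
    Polynomial.finite_setOf_isRoot hp
  have hsub : {x : k | x ≠ 0} ⊆ {x : k | (Polynomial.X ^ n - Polynomial.C 1 : Polynomial k).IsRoot x} := by
    intro x hx
    simp only [Set.mem_setOf_eq, Polynomial.IsRoot, Polynomial.eval_sub, Polynomial.eval_pow,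
      Polynomial.eval_X, Polynomial.eval_C]
    rw [hroot x hx]; ring
  have hinf : {x : k | x ≠ 0}.Infinite :=
    Set.infinite_of_finite_compl (by simp)
  exact (hinf.mono hsub) hfin

end Aux


/-- The tame symbol `(f,g)_t = ((-1)^{v(f)v(g)} f^{-v(g)} g^{v(f)})(0)` of two Laurent series,
where `v` is the `t`-adic valuation (the order) and `(0)` takes the constant term. -/
noncomputable def tameSymbol {l : Type*} [Field l] (f g : LaurentSeries l) : l :=
  (((-1 : LaurentSeries l) ^ (f.order * g.order)) * f ^ (-g.order) * g ^ f.order).coeff 0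

/-- Let `k` be an infinite field and `l` a finite field extension of `k`.  For a nonzero Laurent
series `f ∈ l((t))^*`, one has `Nm_{l/k}((f,g)_t) = 1` for all `g ∈ l((t))^*` if and only if
`v(f) = 0` and `Nm_{l/k}(f(0)) = 1`; i.e. the kernel of the pairing
`l((t))^* × l((t))^* → k^*`, `(f,g) ↦ Nm_{l/k}((f,g)_t)`, is the kernel of the composite
`l[[t]]^* → l^* → k^*` of the constant-term map and the norm map. -/
theorem tame_symbol_kernel_infinite_field {k l : Type*} [Field k] [Infinite k] [Field l]
    [Algebra k l] [FiniteDimensional k l] (f : LaurentSeries l) (hf : f ≠ 0) :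
    (∀ g : LaurentSeries l, g ≠ 0 → Algebra.norm k (tameSymbol f g) = 1) ↔
      f.order = 0 ∧ Algebra.norm k (f.coeff 0) = 1 := by
  constructor
  · intro H
    -- Step 1: order f = 0
    have horder : f.order = 0 := by
      have key : ∀ c : k, c ≠ 0 → c ^ (f.order * (Module.finrank k l : ℤ)) = 1 := by
        intro c hc
        set g : LaurentSeries l := HahnSeries.C (algebraMap k l c) with hg
        have hcl : algebraMap k l c ≠ 0 := (map_ne_zero _).mpr hc
        have hgne : g ≠ 0 := HahnSeries.single_ne_zero hcl
        have hgord : g.order = 0 := HahnSeries.order_single hcl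
        have hts : tameSymbol f g = algebraMap k l (c ^ f.order) := by
          rw [tameSymbol, hgord, mul_zero, zpow_zero, neg_zero, zpow_zero, one_mul, one_mul, hg,
            ← map_zpow₀ (HahnSeries.C : l →+* LaurentSeries l), ← map_zpow₀ (algebraMap k l)]
          rw [HahnSeries.C_apply, HahnSeries.coeff_single_same, map_zpow₀]
        have := H g hgne
        rw [hts, Algebra.norm_algebraMap] at this
        rw [← zpow_natCast _ (Module.finrank k l), ← zpow_mul] at this
        exact this
      have := infinite_field_zpow_eq_one key
      have hd : (Module.finrank k l : ℤ) ≠ 0 := by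
        have hpos : 0 < Module.finrank k l := Module.finrank_pos
        exact_mod_cast hpos.ne'
      exact (mul_eq_zero.mp this).resolve_right hd
    refine ⟨horder, ?_⟩
    -- Step 2: use g = t
    have hts : tameSymbol f (HahnSeries.single (1:ℤ) (1:l)) = (f.coeff 0)⁻¹ := by
      have hgord : (HahnSeries.single (1:ℤ) (1:l)).order = 1 :=
        HahnSeries.order_single one_ne_zero
      rw [tameSymbol, horder, zero_mul, zpow_zero, zpow_zero, one_mul, mul_one, hgord]
      have := inv_coeff_zero f hf horder
      rw [show ((-1 : ℤ)) = -1 from rfl, zpow_neg, zpow_one]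
      exact this.2.2
    have := H (HahnSeries.single (1:ℤ) (1:l)) (HahnSeries.single_ne_zero one_ne_zero)
    rw [hts, ← normMWZ_apply, map_inv₀, inv_eq_one, normMWZ_apply] at this
    exact this
  · rintro ⟨h1, h2⟩ g hg
    have hts : tameSymbol f g = (f.coeff 0) ^ (-g.order) := by
      rw [tameSymbol, h1, zero_mul, zpow_zero, zpow_zero, one_mul, mul_one]
      exact (zpow_coeff_zero f hf h1 (-g.order)).2
    rw [hts, ← normMWZ_apply, map_zpow₀, normMWZ_apply, h2, one_zpow]
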